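/- Let σ₁ < σ₂ < ⋯ < σ_N be the solutions in (0, n₁kdθ) of tan(y) = -y/√((n₁kdθ)²-y²), with σ_j ∈ (π/2+(j-1)π, π/2+jπ), and suppose n₁kdθ/π - 1 < N ≤ n₁kdθ/π. Then for any α > 1/3 there is a constant C (independent of N) such that sup over 1 ≤ j ≤ N - ⌊N^α⌋ - 1 of |σ_{j+1} - σ_j - π| ≤ C · N^{1/2 - 3α/2} for all N large enough. -/
import Mathlib


open Real

private lemma arcsin_diff_le {a b : ℝ} (ha : 0 ≤ a) (hab : a ≤ b) (hb : b < 1) :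
    Real.arcsin b - Real.arcsin a ≤ (b - a) / Real.sqrt (1 - b ^ 2) := by
  rcases eq_or_lt_of_le hab with rfl | hab'
  · simp
  have hbpos : 0 < Real.sqrt (1 - b ^ 2) := Real.sqrt_pos.2 (by nlinarith)
  obtain ⟨ξ, hξ, hslope⟩ := exists_hasDerivAt_eq_slope Real.arcsin
    (fun x => 1 / Real.sqrt (1 - x ^ 2)) hab'
    (Real.continuous_arcsin.continuousOn)
    (fun x hx => Real.hasDerivAt_arcsin (by nlinarith [hx.1]) (by nlinarith [hx.2]))
  have hξb : ξ ^ 2 ≤ b ^ 2 := by nlinarith [hξ.1, hξ.2]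
  have hξpos : 0 < Real.sqrt (1 - ξ ^ 2) := Real.sqrt_pos.2 (by nlinarith [hξ.2])
  have hmono : Real.sqrt (1 - b ^ 2) ≤ Real.sqrt (1 - ξ ^ 2) :=
    Real.sqrt_le_sqrt (by linarith)
  have hx := (div_eq_div_iff hξpos.ne' (sub_pos.2 hab').ne').1 hslope
  have h1 : Real.arcsin b - Real.arcsin a = (b - a) / Real.sqrt (1 - ξ ^ 2) := by
    rw [eq_div_iff hξpos.ne']
    linarith [hx]
  rw [h1]
  apply div_le_div_of_nonneg_left (by linarith) hbpos hmono

private lemma key_identity {s C : ℝ} (j : ℕ)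
    (h1 : π / 2 + ((j : ℝ) - 1) * π < s) (h2 : s < π / 2 + (j : ℝ) * π)
    (h3 : 0 < s) (h4 : s < C)
    (heq : Real.tan s = -s / Real.sqrt (C ^ 2 - s ^ 2)) :
    s + Real.arcsin (s / C) = (j : ℝ) * π := by
  have hC : 0 < C := h3.trans h4
  set ε := (j : ℝ) * π - s with hεdef
  have hε1 : ε < π / 2 := by simp only [hεdef]; linarith
  have hε2 : -(π / 2) < ε := by simp only [hεdef]; linarith
  have hsqpos : 0 < Real.sqrt (C ^ 2 - s ^ 2) := Real.sqrt_pos.2 (by nlinarith)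
  have htanε : Real.tan ε = s / Real.sqrt (C ^ 2 - s ^ 2) := by
    have hper : Real.tan (-ε + (j : ℝ) * π) = Real.tan (-ε) := by
      have := (Real.tan_periodic.nat_mul j) (-ε)
      simpa using this
    have hts : Real.tan s = -Real.tan ε := by
      have h'' : Real.tan s = Real.tan (-ε + (j : ℝ) * π) := by
        congr 1
        simp only [hεdef]
        ring
      rw [h'', hper, Real.tan_neg]
    rw [hts] at heq
    have hx : s / Real.sqrt (C ^ 2 - s ^ 2) = -(-s / Real.sqrt (C ^ 2 - s ^ 2)) := by
      ring
    rw [hx, ← heq, neg_neg]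
  have htanpos : 0 < Real.tan ε := by
    rw [htanε]; exact div_pos h3 hsqpos
  have hcos : 0 < Real.cos ε := Real.cos_pos_of_mem_Ioo ⟨hε2, hε1⟩
  have hεpos : 0 < ε := by
    by_contra h
    push_neg at h
    have hsin : Real.sin ε ≤ 0 :=
      Real.sin_nonpos_of_nonpos_of_neg_pi_le h (by linarith [Real.pi_pos])
    have : Real.tan ε ≤ 0 := by
      rw [Real.tan_eq_sin_div_cos]
      exact div_nonpos_of_nonpos_of_nonneg hsin hcos.le
    linarith
  have hsin : 0 < Real.sin ε :=
    Real.sin_pos_of_pos_of_lt_pi hεpos (by linarith [Real.pi_pos])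
  have hkey : Real.sin ε * Real.sqrt (C ^ 2 - s ^ 2) = s * Real.cos ε := by
    have h := htanε
    rw [Real.tan_eq_sin_div_cos] at h
    field_simp at h
    linarith [h]
  have hsq2 : (Real.sqrt (C ^ 2 - s ^ 2)) ^ 2 = C ^ 2 - s ^ 2 :=
    Real.sq_sqrt (by nlinarith)
  have h5 : (Real.sin ε) ^ 2 * (C ^ 2 - s ^ 2) = s ^ 2 * (Real.cos ε) ^ 2 := by
    linear_combination (Real.sin ε * Real.sqrt (C ^ 2 - s ^ 2) + s * Real.cos ε) * hkey -
      (Real.sin ε) ^ 2 * hsq2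
  have hpy : Real.sin ε ^ 2 + Real.cos ε ^ 2 = 1 := Real.sin_sq_add_cos_sq ε
  have h6 : (Real.sin ε * C - s) * (Real.sin ε * C + s) = 0 := by
    linear_combination h5 + s ^ 2 * hpy
  have h7 : Real.sin ε * C + s > 0 := by positivity
  have h8 : Real.sin ε * C = s := by
    rcases mul_eq_zero.1 h6 with h | h
    · linarith
    · linarith
  have hsin_eq : Real.sin ε = s / C := by
    field_simp
    linarith
  have : Real.arcsin (s / C) = ε := by
    rw [← hsin_eq, Real.arcsin_sin (by linarith) hε1.le]
  rw [this]
  simp only [hεdef]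
  ring

set_option maxHeartbeats 2000000 in
theorem stmt_1 (c : ℕ → ℝ) (σ : ℕ → ℕ → ℝ)
    (hc : ∀ N : ℕ, c N / π - 1 < (N : ℝ) ∧ (N : ℝ) ≤ c N / π)
    (hσmem : ∀ N : ℕ, ∀ j : ℕ, 1 ≤ j → j ≤ N →
      π / 2 + ((j : ℝ) - 1) * π < σ N j ∧ σ N j < π / 2 + (j : ℝ) * π ∧
        0 < σ N j ∧ σ N j < c N)
    (hσeq : ∀ N : ℕ, ∀ j : ℕ, 1 ≤ j → j ≤ N →
      Real.tan (σ N j) = - σ N j / Real.sqrt ((c N) ^ 2 - (σ N j) ^ 2))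
    (α : ℝ) (hα : 1 / 3 < α) :
    ∃ C : ℝ, ∃ N₀ : ℕ, ∀ N : ℕ, N₀ ≤ N → ∀ j : ℕ,
      1 ≤ j → j ≤ N - ⌊(N : ℝ) ^ α⌋₊ - 1 →
      |σ N (j + 1) - σ N j - π| ≤ C * (N : ℝ) ^ ((1 : ℝ) / 2 - 3 * α / 2) := by
  have hα0 : (0 : ℝ) < α := lt_trans (by norm_num) hα
  rcases le_or_gt α 1 with hα1 | hα1
  · -- main case : 1/3 < α ≤ 1
    obtain ⟨N₁, hN₁⟩ := exists_nat_ge ((3 : ℝ) ^ (1 / α))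
    refine ⟨2 * Real.sqrt 2, max N₁ 1, ?_⟩
    intro N hN j hj1 hj2
    have hN1 : 1 ≤ N := le_trans (le_max_right _ _) hN
    have hNR : (1 : ℝ) ≤ (N : ℝ) := by exact_mod_cast hN1
    have hNpos : (0 : ℝ) < (N : ℝ) := by linarith
    have h3le : (3 : ℝ) ≤ (N : ℝ) ^ α := by
      have e1 : ((3 : ℝ) ^ (1 / α)) ^ α = 3 := by
        rw [← Real.rpow_mul (by norm_num : (0 : ℝ) ≤ 3), one_div_mul_cancel hα0.ne',
          Real.rpow_one]
      calc (3 : ℝ) = ((3 : ℝ) ^ (1 / α)) ^ α := e1.symm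
        _ ≤ (N : ℝ) ^ α := by
            apply Real.rpow_le_rpow (Real.rpow_nonneg (by norm_num) _) _ hα0.le
            calc (3 : ℝ) ^ (1 / α) ≤ (N₁ : ℝ) := hN₁
              _ ≤ (N : ℝ) := by exact_mod_cast le_trans (le_max_left _ _) hN
    set K := ⌊(N : ℝ) ^ α⌋₊ with hKdef
    have hK3 : 3 ≤ K := Nat.le_floor (by exact_mod_cast h3le)
    have hKltα : (N : ℝ) ^ α < (K : ℝ) + 1 := Nat.lt_floor_add_one _
    have hjN : j + 1 ≤ N - K := by omega
    have hKN : K + 2 ≤ N := by omega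
    have hj1N : j + 1 ≤ N := by omega
    have hjle : j ≤ N := by omega
    have hcge : (N : ℝ) * π ≤ c N := by
      have := (hc N).2
      rwa [le_div_iff₀ Real.pi_pos] at this
    obtain ⟨hm1a, hm1b, hm1c, hm1d⟩ := hσmem N j hj1 hjle
    obtain ⟨hm2a, hm2b, hm2c, hm2d⟩ := hσmem N (j + 1) (by omega) hj1N
    have he1 := hσeq N j hj1 hjle
    have he2 := hσeq N (j + 1) (by omega) hj1N
    set s := σ N j
    set s' := σ N (j + 1)
    set cc := c N with hccdef
    have hcpos : 0 < cc := lt_of_lt_of_le (by positivity) hcge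
    have key1 : s + Real.arcsin (s / cc) = (j : ℝ) * π :=
      key_identity j hm1a hm1b hm1c hm1d he1
    have key2 : s' + Real.arcsin (s' / cc) = ((j + 1 : ℕ) : ℝ) * π :=
      key_identity (j + 1) hm2a hm2b hm2c hm2d he2
    push_cast at key2 hm2a hm2b
    have hss' : s < s' := by linarith
    have hdiff2 : s' - s < 2 * π := by linarith
    have hccs : 0 < cc ^ 2 - s' ^ 2 := by
      have hmul : (0 : ℝ) < (cc - s') * (cc + s') :=
        mul_pos (by linarith) (by linarith)
      linarith [hmul]
    set X := Real.sqrt (cc ^ 2 - s' ^ 2) with hXdef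
    have hXpos : 0 < X := Real.sqrt_pos.2 hccs
    have hdivle : s / cc ≤ s' / cc := (div_le_div_iff_of_pos_right hcpos).2 hss'.le
    have harcle : Real.arcsin (s / cc) ≤ Real.arcsin (s' / cc) :=
      Real.monotone_arcsin hdivle
    have habs : |s' - s - π| = Real.arcsin (s' / cc) - Real.arcsin (s / cc) := by
      have hsum : s' - s - π = -(Real.arcsin (s' / cc) - Real.arcsin (s / cc)) := by
        linarith
      rw [hsum, abs_neg, abs_of_nonneg (by linarith)]
    have hb1 : s' / cc < 1 := (div_lt_one hcpos).2 hm2d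
    have harc := arcsin_diff_le (div_nonneg hm1c.le hcpos.le) hdivle hb1
    have hXsq : X ^ 2 = cc ^ 2 - s' ^ 2 := Real.sq_sqrt hccs.le
    have hsqrt_eq : Real.sqrt (1 - (s' / cc) ^ 2) = X / cc := by
      have h0 : 1 - (s' / cc) ^ 2 = (X / cc) ^ 2 := by
        rw [div_pow, div_pow, hXsq]
        field_simp
      rw [h0, Real.sqrt_sq (by positivity)]
    have harc2 : Real.arcsin (s' / cc) - Real.arcsin (s / cc) ≤ (s' - s) / X := by
      have heqq : (s' / cc - s / cc) / (X / cc) = (s' - s) / X := by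
        field_simp
      rw [hsqrt_eq, heqq] at harc
      exact harc
    -- lower bound on cc - s'
    have hcast : ((N - K : ℕ) : ℝ) = (N : ℝ) - (K : ℝ) :=
      Nat.cast_sub (by omega)
    have hjub : (j : ℝ) + 1 ≤ (N : ℝ) - (K : ℝ) := by
      have h' : ((j + 1 : ℕ) : ℝ) ≤ ((N - K : ℕ) : ℝ) := Nat.cast_le.2 hjN
      rw [hcast] at h'
      push_cast at h'
      linarith
    have hKlb : (N : ℝ) ^ α - 1 ≤ (K : ℝ) := by linarith
    have hd1 : (N : ℝ) ^ α / 2 * π ≤ cc - s' := by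
      have hs'ub : s' < π / 2 + ((N : ℝ) - (K : ℝ)) * π := by
        have h' : ((j : ℝ) + 1) * π ≤ ((N : ℝ) - (K : ℝ)) * π :=
          mul_le_mul_of_nonneg_right hjub Real.pi_pos.le
        linarith
      have hpi := Real.pi_pos
      have hK' := mul_le_mul_of_nonneg_right hKlb Real.pi_pos.le
      have h3' := mul_le_mul_of_nonneg_right h3le Real.pi_pos.le
      linarith [hK', h3', hs'ub, hcge]
    have hd2 : (N : ℝ) * π ≤ cc + s' := by linarith
    -- lower bound on X
    have hNsum : (N : ℝ) ^ α * (N : ℝ) = (N : ℝ) ^ (α + 1) := by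
      rw [Real.rpow_add hNpos, Real.rpow_one]
    have hprodlb : π ^ 2 / 2 * (N : ℝ) ^ (α + 1) ≤ cc ^ 2 - s' ^ 2 := by
      have hpi := Real.pi_pos
      have hf1 : (0 : ℝ) < (N : ℝ) ^ α / 2 * π := by positivity
      have hmul := mul_le_mul hd1 hd2 (by positivity : (0:ℝ) ≤ (N : ℝ) * π)
        (by linarith : (0:ℝ) ≤ cc - s')
      rw [← hNsum]
      linarith [hmul]
    have hhalf : ((N : ℝ) ^ ((α + 1) / 2)) ^ 2 = (N : ℝ) ^ (α + 1) := by
      rw [← Real.rpow_natCast ((N : ℝ) ^ ((α + 1) / 2)) 2,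
        ← Real.rpow_mul hNpos.le]
      norm_num
    have hs2 : Real.sqrt 2 * Real.sqrt 2 = 2 := Real.mul_self_sqrt (by norm_num)
    have hs2pos : (0 : ℝ) < Real.sqrt 2 := Real.sqrt_pos.2 (by norm_num)
    have hXlb' : π * (N : ℝ) ^ ((α + 1) / 2) ≤ Real.sqrt 2 * X := by
      have h1 : (π * (N : ℝ) ^ ((α + 1) / 2)) ^ 2 ≤ (Real.sqrt 2 * X) ^ 2 := by
        have : (Real.sqrt 2 * X) ^ 2 = 2 * X ^ 2 := by
          rw [mul_pow]; rw [sq]; rw [hs2]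
        rw [this, hXsq, mul_pow, hhalf]
        linarith [hprodlb]
      have hR : (0 : ℝ) ≤ Real.sqrt 2 * X := by positivity
      exact le_of_pow_le_pow_left₀ two_ne_zero hR h1
    set E := (N : ℝ) ^ ((1 : ℝ) / 2 - 3 * α / 2) with hEdef
    have hEpos : 0 < E := Real.rpow_pos_of_pos hNpos _
    have hEN : 1 ≤ E * (N : ℝ) ^ ((α + 1) / 2) := by
      rw [hEdef, ← Real.rpow_add hNpos,
        show (1 : ℝ) / 2 - 3 * α / 2 + (α + 1) / 2 = 1 - α by ring]
      calc (1 : ℝ) = (N : ℝ) ^ (0 : ℝ) := (Real.rpow_zero _).symm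
        _ ≤ (N : ℝ) ^ (1 - α) := Real.rpow_le_rpow_of_exponent_le hNR (by linarith)
    calc |s' - s - π| = Real.arcsin (s' / cc) - Real.arcsin (s / cc) := habs
      _ ≤ (s' - s) / X := harc2
      _ ≤ 2 * π / X := by
          apply (div_le_div_iff_of_pos_right hXpos).2
          linarith
      _ ≤ 2 * Real.sqrt 2 * E := by
          rw [div_le_iff₀ hXpos]
          have hA : E * (π * (N : ℝ) ^ ((α + 1) / 2)) ≤ E * (Real.sqrt 2 * X) :=
            mul_le_mul_of_nonneg_left hXlb' hEpos.le
          have hB : π * 1 ≤ π * (E * (N : ℝ) ^ ((α + 1) / 2)) :=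
            mul_le_mul_of_nonneg_left hEN Real.pi_pos.le
          linarith [hA, hB]
  · -- vacuous case : α > 1
    refine ⟨0, 1, ?_⟩
    intro N hN j hj1 hj2
    exfalso
    have hNR : (1 : ℝ) ≤ (N : ℝ) := by exact_mod_cast hN
    have h1 : (N : ℝ) ≤ (N : ℝ) ^ α := by
      calc (N : ℝ) = (N : ℝ) ^ (1 : ℝ) := (Real.rpow_one _).symm
        _ ≤ (N : ℝ) ^ α := Real.rpow_le_rpow_of_exponent_le hNR hα1.le
    have h2 : N ≤ ⌊(N : ℝ) ^ α⌋₊ := Nat.le_floor h1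
    omega
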